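/- arXiv:1405.5179 — 5 statements merged into one kernel-verified Lean document; each statement's English description precedes it below -/
import Mathlib

section
/- Suppose f : (ℂ^n, 0) → (ℂ, 0) is holomorphic and satisfies f = Σ_j g_j ∂f/∂z_j for holomorphic germs g_j, and 0 is an isolated zero of the gradient ∇f with f having a critical point at 0 (i.e., f is an isolated singularity). Then g_1(0) = ... = g_n(0) = 0. -/
open MvPolynomial


namespace SaitoAux

variable {n : ℕ}

lemma pderiv_comm (i k : Fin n) (p : MvPolynomial (Fin n) ℂ) :
    pderiv i (pderiv k p) = pderiv k (pderiv i p) := by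
  induction p using MvPolynomial.induction_on' with
  | add p q hp hq => simp [map_add, hp, hq]
  | monomial s a =>
    simp only [pderiv_monomial]
    rw [tsub_right_comm]
    congr 1
    by_cases h : i = k
    · subst h; ring
    · rw [Finsupp.tsub_apply, Finsupp.tsub_apply,
        Finsupp.single_eq_of_ne h, Finsupp.single_eq_of_ne (Ne.symm h)]
      simp only [Nat.sub_zero]
      ring

lemma coeff_zero_pderiv (i : Fin n) (p : MvPolynomial (Fin n) ℂ) :
    coeff 0 (pderiv i p) = coeff (Finsupp.single i 1) p := by
  induction p using MvPolynomial.induction_on' with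
  | add p q hp hq => simp [map_add, hp, hq]
  | monomial s a =>
    simp only [pderiv_monomial, coeff_monomial]
    by_cases hs : s = Finsupp.single i 1
    · subst hs; simp
    · rw [if_neg hs]
      by_cases h0 : s - Finsupp.single i 1 = 0
      · rw [if_pos h0]
        have hle : s ≤ Finsupp.single i 1 := tsub_eq_zero_iff_le.mp h0
        have hsi : s i = 0 := by
          rcases Nat.le_one_iff_eq_zero_or_eq_one.mp
              ((Finsupp.le_def.mp hle i).trans_eq (Finsupp.single_eq_same)) with h | h
          · exact h
          · exfalso; apply hs
            ext j
            by_cases hj : j = i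
            · subst hj; simp [h]
            · have := Finsupp.le_def.mp hle j
              rw [Finsupp.single_eq_of_ne hj] at this ⊢
              omega
        simp [hsi]
      · rw [if_neg h0]

lemma contDiff_eval (p : MvPolynomial (Fin n) ℂ) :
    ContDiff ℝ 1 (fun z : Fin n → ℂ => eval z p) := by
  induction p using MvPolynomial.induction_on with
  | C a => simpa using contDiff_const
  | add p q hp hq => simpa using hp.add hq
  | mul_X p i hp =>
    simpa using hp.mul ((ContinuousLinearMap.proj i : (Fin n → ℂ) →L[ℝ] ℂ).contDiff)

lemma hasDerivAt_eval (p : MvPolynomial (Fin n) ℂ) {z : ℝ → Fin n → ℂ} {t : ℝ}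
    {w : Fin n → ℂ} (hz : HasDerivAt z w t) :
    HasDerivAt (fun s => eval (z s) p) (∑ j, eval (z t) (pderiv j p) * w j) t := by
  induction p using MvPolynomial.induction_on with
  | C a => simpa [pderiv_C] using hasDerivAt_const t (eval (z t) (C a) : ℂ)
  | add p q hp hq =>
    simp only [map_add, add_mul, Finset.sum_add_distrib]
    exact hp.add hq
  | mul_X p i hp =>
    have hzi : HasDerivAt (fun s => z s i) (w i) t := hasDerivAt_pi.mp hz i
    have := hp.mul hzi
    simp only [eval_mul, eval_X] at this ⊢
    refine this.congr_deriv (Eq.symm ?_)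
    classical
    simp only [pderiv_mul, pderiv_X, eval_add, eval_mul, eval_X, add_mul, Finset.sum_add_distrib,
      Finset.sum_mul]
    congr 1
    · apply Finset.sum_congr rfl; intro j _; ring
    · rw [Finset.sum_eq_single i]
      · simp
      · intro j _ hj
        simp [Pi.single_eq_of_ne (Ne.symm hj)]
      · simp
  
end SaitoAux

/-- (Saito, Lemma 4.2.) Suppose `f` vanishes at `0` together with its gradient,
`0` is an isolated zero of the gradient `∇f`, and `f = ∑ j, g j * ∂f/∂z j`.
Then `g j (0) = 0` for every `j`. (Polynomial formulation of the germ
statement.) -/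
theorem coeffs_vanish_of_euler_type_relation {n : ℕ}
    (f : MvPolynomial (Fin n) ℂ) (g : Fin n → MvPolynomial (Fin n) ℂ)
    (hf0 : coeff 0 f = 0)
    (hlin : ∀ j : Fin n, coeff (Finsupp.single j 1) f = 0)
    (hiso : ∃ ε > (0 : ℝ), ∀ z : Fin n → ℂ, ‖z‖ < ε →
      (∀ j, eval z (pderiv j f) = 0) → z = 0)
    (hrel : f = ∑ j, g j * pderiv j f) :
    ∀ j, eval (0 : Fin n → ℂ) (g j) = 0 := by
  classical
  by_contra hcon
  push_neg at hcon
  obtain ⟨j0, hj0⟩ := hcon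
  obtain ⟨ε, hε, hiso'⟩ := hiso
  -- the vector field
  set G : (Fin n → ℂ) → (Fin n → ℂ) := fun z j => eval z (g j) with hG
  have hGc : ContDiff ℝ 1 G := contDiff_pi.mpr fun j => SaitoAux.contDiff_eval (g j)
  -- local flow through 0
  obtain ⟨z, hz0, ε', hε', hzd⟩ :=
    ContDiffAt.exists_forall_mem_closedBall_exists_eq_forall_mem_Ioo_hasDerivAt₀ (f := G) (x₀ := 0) hGc.contDiffAt 0
  -- continuity at 0 gives smallness
  have hzc0 : ContinuousAt z 0 := (hzd 0 (by constructor <;> simp [hε'] <;> linarith)).continuousAt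
  obtain ⟨δ, hδ, hδε⟩ := Metric.continuousAt_iff.mp hzc0 ε hε
  set b : ℝ := min (ε' / 2) (δ / 2) with hb
  have hb0 : 0 < b := lt_min (by linarith) (by linarith)
  have hIcc : Set.Icc (0 : ℝ) b ⊆ Set.Ioo (0 - ε') (0 + ε') := by
    intro t ht
    constructor
    · have := ht.1; simp only [zero_sub]; linarith
    · have h1 := ht.2
      have h2 : b ≤ ε' / 2 := min_le_left _ _
      simp only [zero_add]; linarith
  have hznorm : ∀ t ∈ Set.Icc (0 : ℝ) b, ‖z t‖ < ε := by
    intro t ht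
    have h1 : dist t 0 < δ := by
      rw [Real.dist_eq, sub_zero, abs_of_nonneg ht.1]
      have h2 : b ≤ δ / 2 := min_le_right _ _
      linarith [ht.2]
    have := hδε h1
    rwa [hz0, dist_zero_right] at this
  have hzcon : ContinuousOn z (Set.Icc 0 b) :=
    fun t ht => ((hzd t (hIcc ht)).continuousAt).continuousWithinAt
  -- the clamp
  set τ : ℝ → ℝ := fun t => max 0 (min t b) with hτ
  have hτmem : ∀ t, τ t ∈ Set.Icc (0 : ℝ) b := fun t =>
    ⟨le_max_left _ _, max_le hb0.le (min_le_right _ _)⟩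
  have hτeq : ∀ t ∈ Set.Icc (0 : ℝ) b, τ t = t := by
    intro t ht
    simp only [hτ]
    rw [min_eq_left ht.2, max_eq_right ht.1]
  -- the matrix entries
  set a : ℝ → Fin n → Fin n → ℂ := fun t i k => eval (z (τ t)) (pderiv i (g k)) with ha
  -- uniform bound on matrix entries
  set s : ℝ → ℝ := fun t => ∑ i, ∑ k, ‖eval (z t) (pderiv i (g k))‖ with hs
  have hscon : ContinuousOn s (Set.Icc 0 b) := by
    apply continuousOn_finset_sum
    intro i _
    apply continuousOn_finset_sum
    intro k _
    exact (((SaitoAux.contDiff_eval (pderiv i (g k))).continuous).comp_continuousOn hzcon).norm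
  obtain ⟨C, hC⟩ := (isCompact_Icc (a := (0:ℝ)) (b := b)).exists_bound_of_continuousOn hscon
  have hsC : ∀ t ∈ Set.Icc (0:ℝ) b, s t ≤ C := fun t ht => (le_abs_self _).trans (hC t ht)
  have hC0 : (0 : ℝ) ≤ C := by
    have := hC 0 ⟨le_refl _, hb0.le⟩
    exact (norm_nonneg _).trans this
  -- row-sum bound
  have hrow : ∀ t (i : Fin n), ∑ k, ‖a t i k‖ ≤ C := by
    intro t i
    have h1 : ∑ k, ‖a t i k‖ ≤ s (τ t) := by
      simp only [hs, ha]
      exact Finset.single_le_sum (f := fun i => ∑ k, ‖eval (z (τ t)) (pderiv i (g k))‖)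
        (fun i _ => Finset.sum_nonneg fun k _ => norm_nonneg _) (Finset.mem_univ i)
    exact h1.trans (hsC _ (hτmem t))
  -- the linear ODE right-hand side
  set F : ℝ → (Fin n → ℂ) → (Fin n → ℂ) := fun t v i => v i - ∑ k, a t i k * v k with hF
  -- Lipschitz
  set K : NNReal := 1 + Real.toNNReal C with hK
  have hLip : ∀ t, LipschitzWith K (F t) := by
    intro t
    rw [lipschitzWith_iff_dist_le_mul]
    intro v w
    rw [dist_eq_norm, dist_eq_norm]
    have hKnn : ((K : ℝ)) = 1 + C := by
      simp [hK, Real.coe_toNNReal _ hC0]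
    rw [hKnn]
    have hnn : (0:ℝ) ≤ (1 + C) * ‖v - w‖ := by positivity
    rw [pi_norm_le_iff_of_nonneg hnn]
    intro i
    have hcomp : (F t v - F t w) i = (v i - w i) - ∑ k, a t i k * (v k - w k) := by
      simp only [hF, Pi.sub_apply, mul_sub, Finset.sum_sub_distrib]
      ring
    rw [hcomp]
    calc ‖(v i - w i) - ∑ k, a t i k * (v k - w k)‖
        ≤ ‖v i - w i‖ + ‖∑ k, a t i k * (v k - w k)‖ := norm_sub_le _ _
      _ ≤ ‖v - w‖ + ∑ k, ‖a t i k‖ * ‖v k - w k‖ := by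
          apply add_le_add (norm_le_pi_norm (v - w) i)
          exact (norm_sum_le _ _).trans (le_of_eq (by simp [norm_mul]))
      _ ≤ ‖v - w‖ + ∑ k, ‖a t i k‖ * ‖v - w‖ := by
          gcongr with k hk
          exact norm_le_pi_norm (v - w) k
      _ ≤ ‖v - w‖ + C * ‖v - w‖ := by
          rw [← Finset.sum_mul]
          gcongr
          exact hrow t i
      _ = (1 + C) * ‖v - w‖ := by ring
  -- the gradient along the flow
  set V : ℝ → Fin n → ℂ := fun t i => eval (z t) (pderiv i f) with hV
  -- differentiated Euler relation
  have hrel' : ∀ (i : Fin n) (x : Fin n → ℂ),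
      eval x (pderiv i f) =
        ∑ k, (eval x (pderiv i (g k)) * eval x (pderiv k f)
          + eval x (g k) * eval x (pderiv i (pderiv k f))) := by
    intro i x
    conv_lhs => rw [hrel]
    rw [map_sum, map_sum]
    apply Finset.sum_congr rfl
    intro k _
    rw [pderiv_mul]
    simp [mul_comm]
  -- V solves the linear ODE
  have hVd : ∀ t ∈ Set.Icc (0:ℝ) b, HasDerivAt V (F t (V t)) t := by
    intro t ht
    have hzt : HasDerivAt z (G (z t)) t := hzd t (hIcc ht)
    rw [hasDerivAt_pi]
    intro i
    have h1 : HasDerivAt (fun s => eval (z s) (pderiv i f))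
        (∑ j, eval (z t) (pderiv j (pderiv i f)) * G (z t) j) t :=
      SaitoAux.hasDerivAt_eval (pderiv i f) hzt
    refine h1.congr_deriv (Eq.symm ?_)
    -- F t (V t) i = ∑ j, eval (z t) (pderiv j (pderiv i f)) * G (z t) j
    have h2 : ∑ j, eval (z t) (pderiv j (pderiv i f)) * G (z t) j
        = ∑ j, eval (z t) (g j) * eval (z t) (pderiv i (pderiv j f)) := by
      apply Finset.sum_congr rfl
      intro j _
      rw [SaitoAux.pderiv_comm]
      simp only [hG]
      ring
    rw [h2]
    have h3 := hrel' i (z t)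
    simp only [hF, hV, hτeq t ht, ha, Finset.sum_add_distrib] at h3 ⊢
    linear_combination h3
  -- initial condition
  have hV0 : V 0 = 0 := by
    funext i
    simp only [hV, hz0]
    have : eval (0 : Fin n → ℂ) (pderiv i f) = coeff 0 (pderiv i f) := by
      rw [eval_zero, constantCoeff_eq]
    rw [this, SaitoAux.coeff_zero_pderiv, hlin i]
    rfl
  -- zero is also a solution; conclude V ≡ 0 on [0, b]
  have hVcon : ContinuousOn V (Set.Icc 0 b) :=
    fun t ht => ((hVd t ht).continuousAt).continuousWithinAt
  have hF0 : ∀ t, F t 0 = 0 := by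
    intro t
    funext i
    simp [hF]
  have hVzero : Set.EqOn V (fun _ => (0 : Fin n → ℂ)) (Set.Icc 0 b) := by
    apply ODE_solution_unique (v := F) hLip hVcon
      (fun t ht => ((hVd t (Set.Ico_subset_Icc_self ht)).hasDerivWithinAt))
      continuousOn_const
      (fun t ht => by
        rw [hF0 t]
        exact hasDerivWithinAt_const t _ 0)
    rw [hV0]
  -- hence the flow consists of critical points, so it is constant
  have hzzero : ∀ t ∈ Set.Icc (0:ℝ) b, z t = 0 := by
    intro t ht
    apply hiso' (z t) (hznorm t ht)
    intro j
    have := congrFun (hVzero ht) j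
    simpa [hV] using this
  -- contradiction with z'(0) = G 0 ≠ 0
  have h0mem : (0:ℝ) ∈ Set.Icc (0:ℝ) b := ⟨le_refl _, hb0.le⟩
  have hu : UniqueDiffWithinAt ℝ (Set.Icc (0:ℝ) b) 0 := (uniqueDiffOn_Icc hb0) 0 h0mem
  have h1 : HasDerivWithinAt z (G (z 0)) (Set.Icc (0:ℝ) b) 0 :=
    (hzd 0 (hIcc h0mem)).hasDerivWithinAt
  have h2 : HasDerivWithinAt z (0 : Fin n → ℂ) (Set.Icc (0:ℝ) b) 0 :=
    (hasDerivWithinAt_const (0:ℝ) _ (0 : Fin n → ℂ)).congr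
      (fun y hy => hzzero y hy) (hzzero 0 h0mem)
  have hG0 : G (z 0) = 0 := by
    rw [← h1.derivWithin hu, ← h2.derivWithin hu]
  apply hj0
  have := congrFun hG0 j0
  rw [hz0] at this
  simpa [hG] using this
end

section
/- Let f_0 be a weakly quasihomogeneous polynomial of type (1; l) with all weights in (0,1), l_n > 1/2, which is a singularity with isolated critical point at 0. Then f_0 contains a monomial of the form z_i z_n (for some i < n) with nonzero coefficient. -/
open MvPolynomial

/-- (cf. Saito, Korollar 1.6.) If `f₀` is a weakly quasihomogeneous isolated
singularity of type `(1; l)` with all weights in `(0,1)` and the last weight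
`> 1/2`, then some monomial `z i * z_last` (`i ≠ last`) appears in `f₀` with a
nonzero coefficient. -/
theorem exists_mixed_quadratic_monomial {n : ℕ} (hn : 1 ≤ n)
    (f₀ : MvPolynomial (Fin (n + 1)) ℂ) (l : Fin (n + 1) → ℝ)
    (hl : ∀ j, 0 < l j ∧ l j < 1) (hln : 1 / 2 < l (Fin.last n))
    (hqh : ∀ a ∈ f₀.support, ∑ j, (a j : ℝ) * l j = 1)
    (hf0 : coeff 0 f₀ = 0)
    (hcrit : ∀ j, eval (0 : Fin (n + 1) → ℂ) (pderiv j f₀) = 0)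
    (hiso : ∃ ε > (0 : ℝ), ∀ z : Fin (n + 1) → ℂ, ‖z‖ < ε →
      (∀ j, eval z (pderiv j f₀) = 0) → z = 0) :
    ∃ i : Fin (n + 1), i ≠ Fin.last n ∧
      coeff (Finsupp.single i 1 + Finsupp.single (Fin.last n) 1) f₀ ≠ 0 := by
  by_contra hcon
  push_neg at hcon
  obtain ⟨ε, hε, hiso⟩ := hiso
  set z : Fin (n + 1) → ℂ := fun k => if k = Fin.last n then ((ε / 2 : ℝ) : ℂ) else 0 with hz
  have hznorm : ‖z‖ < ε := by
    rw [pi_norm_lt_iff hε]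
    intro k
    by_cases hk : k = Fin.last n
    · simp only [hz, hk, if_pos rfl, Complex.norm_real, Real.norm_eq_abs]
      rw [abs_of_pos (by linarith)]
      linarith
    · simp only [hz, if_neg hk, norm_zero]
      exact hε
  have key : ∀ j, eval z (pderiv j f₀) = 0 := by
    intro j
    conv_lhs => rw [f₀.as_sum]
    rw [map_sum, map_sum]
    simp only [pderiv_monomial, eval_monomial]
    apply Finset.sum_eq_zero
    intro a ha
    by_cases haj : a j = 0
    · simp [haj]
    by_cases hprod : ∃ k, k ≠ Fin.last n ∧ (a - Finsupp.single j 1 : Fin (n+1) →₀ ℕ) k ≠ 0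
    · obtain ⟨k, hk, hbk⟩ := hprod
      have hzk : z k = 0 := by simp [hz, hk]
      have hfac : z k ^ ((a - Finsupp.single j 1 : Fin (n+1) →₀ ℕ) k) = 0 := by
        rw [hzk]; exact zero_pow hbk
      have : Finsupp.prod (a - Finsupp.single j 1) (fun k e => z k ^ e) = 0 :=
        Finset.prod_eq_zero (Finsupp.mem_support_iff.mpr hbk) hfac
      rw [this, mul_zero]
    · push_neg at hprod
      exfalso
      have hksub : ∀ k, k ≠ Fin.last n → k ≠ j → a k = 0 := by
        intro k hk hkj
        have h1 := hprod k hk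
        rw [Finsupp.tsub_apply, Finsupp.single_apply, if_neg (Ne.symm hkj)] at h1
        omega
      by_cases hjl : j = Fin.last n
      · subst hjl
        have hsum : ∑ k, (a k : ℝ) * l k = (a (Fin.last n) : ℝ) * l (Fin.last n) := by
          apply Finset.sum_eq_single
          · intro k _ hk
            rw [hksub k hk hk]; simp
          · simp
        rw [hqh a ha] at hsum
        have h2 : 1 ≤ a (Fin.last n) := Nat.one_le_iff_ne_zero.mpr haj
        rcases Nat.lt_or_ge (a (Fin.last n)) 2 with h3 | h3
        · have : a (Fin.last n) = 1 := by omega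
          rw [this] at hsum
          push_cast at hsum
          have := (hl (Fin.last n)).2
          linarith
        · have h4 : (2 : ℝ) ≤ (a (Fin.last n) : ℝ) := by exact_mod_cast h3
          nlinarith [(hl (Fin.last n)).1]
      · -- j ≠ last
        have haj1 : a j = 1 := by
          have h1 := hprod j hjl
          rw [Finsupp.tsub_apply, Finsupp.single_apply, if_pos rfl] at h1
          omega
        have hsum : (a j : ℝ) * l j + (a (Fin.last n) : ℝ) * l (Fin.last n) = 1 := by
          rw [← hqh a ha]
          rw [← Finset.sum_subset (Finset.subset_univ {j, Fin.last n})
            (fun k _ hk => by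
              simp only [Finset.mem_insert, Finset.mem_singleton, not_or] at hk
              rw [hksub k hk.2 hk.1]; simp)]
          rw [Finset.sum_pair hjl]
        rw [haj1] at hsum
        push_cast at hsum
        rcases Nat.lt_or_ge (a (Fin.last n)) 2 with h3 | h3
        · interval_cases h : a (Fin.last n)
          · push_cast at hsum
            have := (hl j).2
            linarith
          · have ha_eq : a = Finsupp.single j 1 + Finsupp.single (Fin.last n) 1 := by
              ext k
              rcases eq_or_ne k j with rfl | hkj
              · simp [haj1, Finsupp.single_apply, if_neg (Ne.symm hjl), hjl]
              · rcases eq_or_ne k (Fin.last n) with rfl | hkl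
                · simp [h, Finsupp.single_apply, if_neg hjl]
                · simp [hksub k hkl hkj, Finsupp.single_apply,
                    if_neg (Ne.symm hkj), if_neg (Ne.symm hkl)]
            have hc := hcon j hjl
            rw [← ha_eq] at hc
            exact (MvPolynomial.mem_support_iff.mp ha) hc
        · have h4 : (2 : ℝ) ≤ (a (Fin.last n) : ℝ) := by exact_mod_cast h3
          nlinarith [(hl j).1]
  have hz0 := hiso z hznorm key
  have : z (Fin.last n) = 0 := by rw [hz0]; rfl
  simp only [hz, if_pos rfl] at this
  rw [Complex.ofReal_eq_zero] at this
  linarith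
end

section
/- With the notation of Theorem 4 (L, L⁻, L⁰, l_min), the quantity 1/l_min − 1 is invariant under the reduction step that removes a pair of weights {l_i, l_n} with l_n > 1/2 and l_i = 1 − l_n from L: if L' = L \ [l_i, l_n], then min L'⁰ computed from L' equals min L⁰ computed from L, provided L' is nonempty; if L' is empty then 1/l_min − 1 = 1. -/
/-- `L⁻ := [1 − a : a ∈ L, a > 1/2]`. -/
def Lminus (L : Multiset ℚ) : Multiset ℚ :=
  (L.filter (fun a => 1 / 2 < a)).map (fun a => 1 - a)

/-- `L⁰ := (L \ L⁻) ∪ {1/2}`. -/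
def Lzero (L : Multiset ℚ) : Multiset ℚ :=
  (L - Lminus L) + {1 / 2}

/-- `l_min := min L⁰` (valued in `WithTop ℚ`). -/
noncomputable def lmin (L : Multiset ℚ) : WithTop ℚ :=
  ((Lzero L).map (fun q => (q : WithTop ℚ))).inf

private lemma lmin_eq (L : Multiset ℚ) :
    lmin L = ((Lzero L).map (fun q : ℚ => (q : WithTop ℚ))).inf := by
  unfold lmin
  rw [Multiset.map_id']
  congr 1
  exact Multiset.bind_singleton _ _

/-- The quantity `1/l_min − 1` is invariant under removing from `L` a pair of
weights `lN > 1/2` and `lI = 1 − lN`: if `L' := L \ [lI, lN]` is nonempty then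
`min L'⁰ = min L⁰`, and if `L'` is empty then `1/l_min − 1 = 1`. -/
theorem lmin_invariant_under_reduction (L : Multiset ℚ) (lI lN : ℚ)
    (hlN : 1 / 2 < lN) (hlI : lI = 1 - lN)
    (hmem : ({lI, lN} : Multiset ℚ) ≤ L) :
    ((L - {lI, lN} ≠ 0) → lmin (L - {lI, lN}) = lmin L) ∧
    ((L - {lI, lN} = 0) → ∃ q : ℚ, lmin L = (q : WithTop ℚ) ∧ 1 / q - 1 = 1) := by
  set L' := L - ({lI, lN} : Multiset ℚ) with hL'
  have hlI2 : lI < 1 / 2 := by rw [hlI]; linarith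
  have hNI : lN ≠ lI := by intro h; rw [h] at hlN; linarith
  have hLsplit : L = L' + {lI, lN} := (tsub_add_cancel_of_le hmem).symm
  have hfilterpair : ({lI, lN} : Multiset ℚ).filter (fun a => 1 / 2 < a) = {lN} := by
    show (lI ::ₘ {lN}).filter (fun a => 1 / 2 < a) = {lN}
    rw [Multiset.filter_cons_of_neg _ (by simpa using not_lt.mpr hlI2.le),
      Multiset.filter_singleton, if_pos (by simpa using hlN)]
  have hfilter : L.filter (fun a => 1 / 2 < a)
      = L'.filter (fun a => 1 / 2 < a) + {lN} := by
    conv_lhs => rw [hLsplit]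
    rw [Multiset.filter_add, hfilterpair]
  have hLm : Lminus L = Lminus L' + {lI} := by
    rw [Lminus, hfilter, Multiset.map_add, Multiset.map_singleton, ← hlI]
    rfl
  have hN0 : Multiset.count lN (Lminus L') = 0 := by
    rw [Multiset.count_eq_zero]
    intro h
    obtain ⟨a, ha, hae⟩ := Multiset.mem_map.mp h
    have := (Multiset.mem_filter.mp ha).2
    linarith [hae]
  have hsub : L - Lminus L = (L' - Lminus L') + {lN} := by
    conv_lhs => rw [hLm, hLsplit]
    ext x
    simp only [Multiset.count_sub, Multiset.count_add, Multiset.insert_eq_cons,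
      Multiset.count_cons, Multiset.count_singleton]
    rcases eq_or_ne x lN with hxN | hxN
    · subst hxN
      simp only [if_pos rfl, if_neg hNI, hN0]
      omega
    · rcases eq_or_ne x lI with hxI | hxI
      · simp only [if_neg hxN, if_pos hxI]
        omega
      · simp only [if_neg hxN, if_neg hxI]
        omega
  have hzero : Lzero L = Lzero L' + {lN} := by
    rw [Lzero, Lzero, hsub, add_right_comm]
  have hmin : lmin L = lmin L' ⊓ ((lN : WithTop ℚ)) := by
    rw [lmin_eq, lmin_eq, hzero, Multiset.map_add, Multiset.inf_add,
      Multiset.map_singleton, Multiset.inf_singleton]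
  have hhalf0 : (1 / 2 : ℚ) ∈ Lzero L' := by
    rw [Lzero]
    exact Multiset.mem_add.mpr (Or.inr (Multiset.mem_singleton.mpr rfl))
  have hhalf : ((1 / 2 : ℚ) : WithTop ℚ) ∈ (Lzero L').map (fun q : ℚ => (q : WithTop ℚ)) :=
    Multiset.mem_map_of_mem _ hhalf0
  have hle : lmin L' ≤ ((1 / 2 : ℚ) : WithTop ℚ) := by
    rw [lmin_eq]
    exact Multiset.inf_le hhalf
  have hLeq : lmin L = lmin L' := by
    rw [hmin, inf_eq_left]
    exact hle.trans (by exact_mod_cast hlN.le)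
  constructor
  · intro _
    exact hLeq.symm
  · intro h0
    refine ⟨1 / 2, ?_, by norm_num⟩
    rw [hLeq, h0, lmin_eq]
    have h1 : Lzero 0 = {1 / 2} := by
      rw [Lzero, Lminus]
      simp
    rw [h1, Multiset.map_singleton, Multiset.inf_singleton]
end

section
/- Let g_0 ∈ ℂ[[z_3, ..., z_n]] be a power series with g_0 ∉ (∂g_0/∂z_3, ..., ∂g_0/∂z_n) (ideal generated by its partials). Define f := z_1 z_2 + (1 + z_2) g_0 ∈ ℂ[[z_1, ..., z_n]]. Then z_1 ∉ (∂f/∂z_2, ∂f/∂z_3, ..., ∂f/∂z_n), the ideal generated by all partials of f except ∂f/∂z_1. -/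
open MvPowerSeries

/-- Partial derivative of a multivariate formal power series. -/
noncomputable def psPderiv {n : ℕ} (j : Fin n) (f : MvPowerSeries (Fin n) ℂ) :
    MvPowerSeries (Fin n) ℂ :=
  fun a => ((a j : ℂ) + 1) * MvPowerSeries.coeff (a + Finsupp.single j 1) f

section Aux

variable {n : ℕ}

lemma coeff_psPderiv (j : Fin (n + 4)) (F : MvPowerSeries (Fin (n + 4)) ℂ)
    (a : Fin (n + 4) →₀ ℕ) :
    MvPowerSeries.coeff a (psPderiv j F) =
      ((a j : ℂ) + 1) * MvPowerSeries.coeff (a + Finsupp.single j 1) F := rfl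

/-- substitute 0 for the variable `z₀` (as a bare function). -/
noncomputable def eps0Fun (F : MvPowerSeries (Fin (n + 4)) ℂ) : MvPowerSeries (Fin (n + 4)) ℂ :=
  fun a => if a 0 = 0 then F a else 0

lemma coeff_eps0Fun (F : MvPowerSeries (Fin (n + 4)) ℂ) (a : Fin (n + 4) →₀ ℕ) :
    MvPowerSeries.coeff a (eps0Fun F) = if a 0 = 0 then MvPowerSeries.coeff a F else 0 := rfl

/-- The ring hom "substitute 0 for the variable `z₀`". -/
noncomputable def eps0 : MvPowerSeries (Fin (n + 4)) ℂ →+* MvPowerSeries (Fin (n + 4)) ℂ where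
  toFun := eps0Fun
  map_one' := by
    ext a
    rw [coeff_eps0Fun]
    by_cases h : a 0 = 0
    · rw [if_pos h]
    · rw [if_neg h, MvPowerSeries.coeff_one, if_neg fun h0 => h (by simp [h0])]
  map_mul' F G := by
    ext a
    show MvPowerSeries.coeff a (eps0Fun (F * G)) = _
    rw [coeff_eps0Fun]
    by_cases h : a 0 = 0
    · rw [if_pos h, MvPowerSeries.coeff_mul, MvPowerSeries.coeff_mul]
      refine Finset.sum_congr rfl fun p hp => ?_
      rw [Finset.HasAntidiagonal.mem_antidiagonal] at hp
      have hadd := DFunLike.congr_fun hp 0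
      simp only [Finsupp.add_apply] at hadd
      rw [coeff_eps0Fun, coeff_eps0Fun, if_pos (by omega : p.1 0 = 0),
        if_pos (by omega : p.2 0 = 0)]
    · rw [if_neg h, MvPowerSeries.coeff_mul]
      refine (Finset.sum_eq_zero fun p hp => ?_).symm
      rw [Finset.HasAntidiagonal.mem_antidiagonal] at hp
      have hadd := DFunLike.congr_fun hp 0
      simp only [Finsupp.add_apply] at hadd
      have : p.1 0 ≠ 0 ∨ p.2 0 ≠ 0 := by omega
      rcases this with h1 | h2
      · rw [coeff_eps0Fun, if_neg h1, zero_mul]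
      · rw [coeff_eps0Fun G, if_neg h2, mul_zero]
  map_zero' := by
    ext a
    rw [coeff_eps0Fun]
    simp
  map_add' F G := by
    ext a
    show MvPowerSeries.coeff a (eps0Fun (F + G)) = _
    rw [map_add, coeff_eps0Fun, map_add, coeff_eps0Fun, coeff_eps0Fun]
    by_cases h : a 0 = 0 <;> simp [h]

lemma coeff_eps0 (F : MvPowerSeries (Fin (n + 4)) ℂ) (a : Fin (n + 4) →₀ ℕ) :
    MvPowerSeries.coeff a (eps0 F) = if a 0 = 0 then MvPowerSeries.coeff a F else 0 := rfl

lemma eps0_eq_self {F : MvPowerSeries (Fin (n + 4)) ℂ}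
    (h : ∀ a : Fin (n + 4) →₀ ℕ, a 0 ≠ 0 → MvPowerSeries.coeff a F = 0) :
    eps0 F = F := by
  ext a
  rw [coeff_eps0]
  by_cases h0 : a 0 = 0
  · rw [if_pos h0]
  · rw [if_neg h0, h a h0]


lemma eps0_X0 : eps0 (MvPowerSeries.X 0 : MvPowerSeries (Fin (n + 4)) ℂ) = 0 := by
  ext a
  rw [coeff_eps0, map_zero (MvPowerSeries.coeff a)]
  by_cases h0 : a 0 = 0
  · rw [if_pos h0, MvPowerSeries.coeff_X, if_neg]
    intro hcon
    rw [hcon] at h0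
    simp at h0
  · rw [if_neg h0]

lemma coeff_mul_single (i : Fin (n + 4)) (F G : MvPowerSeries (Fin (n + 4)) ℂ) :
    MvPowerSeries.coeff (Finsupp.single i 1) (F * G) =
      MvPowerSeries.coeff 0 F * MvPowerSeries.coeff (Finsupp.single i 1) G +
        MvPowerSeries.coeff (Finsupp.single i 1) F * MvPowerSeries.coeff 0 G := by
  rw [MvPowerSeries.coeff_mul, Finsupp.antidiagonal_single, Finset.sum_map,
    show Finset.HasAntidiagonal.antidiagonal (1 : ℕ) = {(0, 1), (1, 0)} from rfl]
  simp

/-- The ideal of series whose coefficients at `0` and at `single 0 1` vanish. -/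
noncomputable def Jideal : Ideal (MvPowerSeries (Fin (n + 4)) ℂ) where
  carrier := {x | MvPowerSeries.coeff 0 x = 0 ∧
    MvPowerSeries.coeff (Finsupp.single 0 1) x = 0}
  add_mem' := by
    rintro a b ⟨ha0, ha1⟩ ⟨hb0, hb1⟩
    constructor <;> rw [map_add] <;> simp [ha0, ha1, hb0, hb1]
  zero_mem' := by constructor <;> simp
  smul_mem' := by
    rintro c x ⟨h0, h1⟩
    refine ⟨?_, ?_⟩
    · show MvPowerSeries.coeff 0 (c * x) = 0
      have hx : MvPowerSeries.constantCoeff x = 0 := h0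
      rw [MvPowerSeries.coeff_zero_eq_constantCoeff_apply, map_mul, hx, mul_zero]
    · show MvPowerSeries.coeff (Finsupp.single 0 1) (c * x) = 0
      rw [coeff_mul_single, h0, h1, mul_zero, mul_zero, add_zero]

lemma coeff_f (g₀ : MvPowerSeries (Fin (n + 4)) ℂ) (b : Fin (n + 4) →₀ ℕ) :
    MvPowerSeries.coeff b (MvPowerSeries.X 0 * MvPowerSeries.X 1 +
        (1 + MvPowerSeries.X 1) * g₀) =
      (if b = Finsupp.single 0 1 + Finsupp.single 1 1 then 1 else 0) +
        (MvPowerSeries.coeff b g₀ +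
          if Finsupp.single 1 1 ≤ b then
            MvPowerSeries.coeff (b - Finsupp.single 1 1) g₀ else 0) := by
  rw [map_add (MvPowerSeries.coeff b), add_mul, one_mul,
    map_add (MvPowerSeries.coeff b),
    MvPowerSeries.X_def (R := ℂ) (0 : Fin (n + 4)),
    MvPowerSeries.X_def (R := ℂ) (1 : Fin (n + 4)),
    MvPowerSeries.monomial_mul_monomial, MvPowerSeries.coeff_monomial,
    MvPowerSeries.coeff_monomial_mul, mul_one, one_mul]

lemma pd_one (g₀ : MvPowerSeries (Fin (n + 4)) ℂ)
    (hdep : ∀ a : Fin (n + 4) →₀ ℕ,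
      (a 0 ≠ 0 ∨ a 1 ≠ 0) → MvPowerSeries.coeff a g₀ = 0) :
    psPderiv 1 (MvPowerSeries.X 0 * MvPowerSeries.X 1 +
        (1 + MvPowerSeries.X 1) * g₀) = MvPowerSeries.X 0 + g₀ := by
  have h01 : (0 : Fin (n + 4)) ≠ 1 := by simp [Fin.ext_iff]
  ext a
  rw [coeff_psPderiv, coeff_f,
    hdep (a + Finsupp.single 1 1) (Or.inr (by simp)),
    if_pos (le_add_self : Finsupp.single 1 1 ≤ a + Finsupp.single 1 1),
    add_tsub_cancel_right, map_add (MvPowerSeries.coeff a), MvPowerSeries.coeff_X]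
  have hiff : (a + Finsupp.single 1 1 = Finsupp.single 0 1 + Finsupp.single 1 1)
      ↔ a = Finsupp.single 0 1 := add_left_injective _ |>.eq_iff
  rw [if_congr hiff rfl rfl]
  by_cases h1 : a 1 = 0
  · rw [h1]
    simp
  · rw [hdep a (Or.inr h1), if_neg (fun hcon => by
      rw [hcon, Finsupp.single_apply, if_neg h01] at h1
      exact h1 rfl)]
    ring

lemma pd_ge2 (g₀ : MvPowerSeries (Fin (n + 4)) ℂ) (j : Fin (n + 4)) (h2 : 2 ≤ (j : ℕ)) :
    psPderiv j (MvPowerSeries.X 0 * MvPowerSeries.X 1 +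
        (1 + MvPowerSeries.X 1) * g₀) = (1 + MvPowerSeries.X 1) * psPderiv j g₀ := by
  have hj0 : j ≠ 0 := fun h => by rw [h] at h2; simp at h2
  have hj1 : j ≠ 1 := fun h => by rw [h] at h2; simp at h2
  have hsj1 : (Finsupp.single j (1 : ℕ)) 1 = 0 := by
    rw [Finsupp.single_apply, if_neg hj1]
  ext a
  have rhs : MvPowerSeries.coeff a ((1 + MvPowerSeries.X 1) * psPderiv j g₀) =
      MvPowerSeries.coeff a (psPderiv j g₀) +
        (if Finsupp.single 1 1 ≤ a then
          MvPowerSeries.coeff (a - Finsupp.single 1 1) (psPderiv j g₀) else 0) := by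
    rw [add_mul, one_mul, map_add (MvPowerSeries.coeff a),
      MvPowerSeries.X_def (R := ℂ) (1 : Fin (n + 4)),
      MvPowerSeries.coeff_monomial_mul, one_mul]
  rw [coeff_psPderiv, coeff_f,
    if_neg (fun hcon => by
      have hx := DFunLike.congr_fun hcon j
      rw [Finsupp.add_apply, Finsupp.add_apply, Finsupp.single_eq_same,
        Finsupp.single_apply, Finsupp.single_apply, if_neg (Ne.symm hj0),
        if_neg (Ne.symm hj1)] at hx
      omega),
    rhs]
  simp only [coeff_psPderiv]
  have hcond : (Finsupp.single 1 1 ≤ a + Finsupp.single j 1) ↔ Finsupp.single 1 1 ≤ a := by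
    rw [Finsupp.single_le_iff, Finsupp.single_le_iff, Finsupp.add_apply, hsj1, add_zero]
  by_cases hle : Finsupp.single 1 1 ≤ a
  · rw [if_pos (hcond.mpr hle), if_pos hle, tsub_add_eq_add_tsub hle]
    have haj : (a - Finsupp.single (1 : Fin (n + 4)) (1 : ℕ)) j = a j := by
      rw [Finsupp.tsub_apply, Finsupp.single_apply, if_neg (Ne.symm hj1), tsub_zero]
    rw [haj]
    ring
  · rw [if_neg (fun hcon => hle (hcond.mp hcon)), if_neg hle]
    ring

end Aux

/-- Let `g₀ ∈ ℂ[[z₂,…,z_{n-1}]]` (a power series in `n ≥ 4` variables,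
depending only on the variables of index `≥ 2`), vanishing at `0`, with `g₀`
not in the ideal generated by its own partial derivatives.  Then for
`f := z₀ z₁ + (1 + z₁) g₀` the variable `z₀` does not belong to the ideal
generated by all partials of `f` except `∂f/∂z₀`. -/
theorem not_mem_ideal_of_partials {n : ℕ}
    (g₀ : MvPowerSeries (Fin (n + 4)) ℂ)
    (hdep : ∀ a : Fin (n + 4) →₀ ℕ,
      (a 0 ≠ 0 ∨ a 1 ≠ 0) → MvPowerSeries.coeff a g₀ = 0)
    (hg0 : MvPowerSeries.coeff 0 g₀ = 0)
    (hnotmem : g₀ ∉ Ideal.span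
      {p | ∃ j : Fin (n + 4), 2 ≤ (j : ℕ) ∧ p = psPderiv j g₀}) :
    (MvPowerSeries.X 0 : MvPowerSeries (Fin (n + 4)) ℂ) ∉
      Ideal.span {p | ∃ j : Fin (n + 4), j ≠ 0 ∧
        p = psPderiv j (MvPowerSeries.X 0 * MvPowerSeries.X 1 +
          (1 + MvPowerSeries.X 1) * g₀)} := by
  intro hmem
  set Q : Set (MvPowerSeries (Fin (n + 4)) ℂ) :=
    {p | ∃ j : Fin (n + 4), 2 ≤ (j : ℕ) ∧ p = psPderiv j g₀} with hQ
  set I : Ideal (MvPowerSeries (Fin (n + 4)) ℂ) := Ideal.span Q with hI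
  -- generators of I don't involve z₀
  have hqdep : ∀ q ∈ Q, ∀ a : Fin (n + 4) →₀ ℕ, a 0 ≠ 0 → MvPowerSeries.coeff a q = 0 := by
    rintro q ⟨j, hj2, rfl⟩ a ha
    rw [coeff_psPderiv, hdep _ (Or.inl (by
      rw [Finsupp.add_apply]
      omega)), mul_zero]
  -- if some generator is a unit we are done at once
  by_cases hunit : ∃ q ∈ Q, IsUnit q
  · obtain ⟨q, hq, hu⟩ := hunit
    refine hnotmem ?_
    rw [hI, Ideal.eq_top_of_isUnit_mem _ (Ideal.subset_span hq) hu]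
    exact Submodule.mem_top
  push_neg at hunit
  have hq0 : ∀ q ∈ Q, MvPowerSeries.coeff 0 q = 0 := by
    intro q hq
    by_contra h
    exact hunit q hq (MvPowerSeries.isUnit_iff_constantCoeff.mpr (isUnit_iff_ne_zero.mpr h))
  -- X 0 lies in I ⊔ (X 0 + g₀)
  have hX0 : (MvPowerSeries.X 0 : MvPowerSeries (Fin (n + 4)) ℂ) ∈
      I ⊔ Ideal.span {MvPowerSeries.X 0 + g₀} := by
    refine (Ideal.span_le.mpr ?_) hmem
    rintro p ⟨j, hj, rfl⟩
    by_cases hj1 : j = 1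
    · subst hj1
      rw [pd_one g₀ hdep]
      exact Submodule.mem_sup_right (Ideal.subset_span rfl)
    · have hv0 : (j : ℕ) ≠ 0 := fun h => hj (by
        rw [Fin.ext_iff, h]
        simp)
      have hv1 : (j : ℕ) ≠ 1 := fun h => hj1 (by
        rw [Fin.ext_iff, h]
        simp)
      have h2 : 2 ≤ (j : ℕ) := by omega
      rw [pd_ge2 g₀ j h2]
      exact Submodule.mem_sup_left (Ideal.mul_mem_left _ _ (Ideal.subset_span ⟨j, h2, rfl⟩))
  obtain ⟨t, ht, y, hy, heq⟩ := Submodule.mem_sup.mp hX0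
  obtain ⟨h, rfl⟩ := Ideal.mem_span_singleton'.mp hy
  -- I is contained in the ideal J
  have hIJ : I ≤ Jideal := by
    rw [hI]
    refine Ideal.span_le.mpr ?_
    intro q hq
    refine ⟨hq0 q hq, ?_⟩
    exact hqdep q hq _ (by simp)
  -- comparing coefficients at `single 0 1` : constant coefficient of h is 1
  have hc : MvPowerSeries.coeff 0 h = 1 := by
    have hcc := congrArg (MvPowerSeries.coeff (Finsupp.single 0 1)) heq
    rw [map_add (MvPowerSeries.coeff (Finsupp.single 0 1)), (hIJ ht).2,
      coeff_mul_single, map_add (MvPowerSeries.coeff (Finsupp.single 0 1)),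
      map_add (MvPowerSeries.coeff 0), MvPowerSeries.coeff_X, if_pos rfl,
      hdep _ (Or.inl (by simp)), MvPowerSeries.coeff_X,
      if_neg (by
        intro hcon
        have := DFunLike.congr_fun hcon 0
        simp at this), hg0] at hcc
    simpa using hcc
  -- apply eps0
  have hteI : eps0 t ∈ I := by
    have hle : I ≤ Ideal.comap (eps0 (n := n)) I := by
      rw [hI]
      refine Ideal.span_le.mpr ?_
      intro q hq
      show eps0 q ∈ I
      rw [eps0_eq_self (hqdep q hq)]
      exact Ideal.subset_span hq
    exact hle ht
  have he := congrArg (eps0 (n := n)) heq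
  rw [map_add, map_mul, map_add, eps0_X0, eps0_eq_self (F := g₀) (fun a ha => hdep a (Or.inl ha)), zero_add] at he
  -- so (eps0 h) * g₀ = - eps0 t ∈ I
  have hmemI : eps0 h * g₀ ∈ I := by
    rw [eq_neg_of_add_eq_zero_right he]
    exact neg_mem hteI
  -- eps0 h is a unit
  have hu : IsUnit (eps0 h) := by
    refine MvPowerSeries.isUnit_iff_constantCoeff.mpr ?_
    have : MvPowerSeries.constantCoeff (eps0 h) = 1 := by
      rw [← MvPowerSeries.coeff_zero_eq_constantCoeff_apply, coeff_eps0]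
      simpa using hc
    rw [this]
    exact isUnit_one
  obtain ⟨u, hu⟩ := hu
  have : g₀ ∈ I := by
    have h1 : (u : MvPowerSeries (Fin (n + 4)) ℂ) * g₀ ∈ I := by rw [hu]; exact hmemI
    have h2 := I.mul_mem_left (↑u⁻¹) h1
    rwa [← mul_assoc, Units.inv_mul, one_mul] at h2
  exact hnotmem this
end

section
/- The polynomial g_0 := z_3^4 + z_3^2 z_4^3 + z_4^5 does not belong to the ideal generated by its partial derivatives (∂g_0/∂z_3, ∂g_0/∂z_4) in ℂ[[z_3, z_4]]; equivalently, g_0 is not quasihomogeneous in any coordinates. -/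
open MvPowerSeries

namespace NotMemAux

/-- The exponent `(a, b)` as a finitely supported function on `Fin 2`. -/
noncomputable def e (a b : ℕ) : Fin 2 →₀ ℕ :=
  Finsupp.single 0 a + Finsupp.single 1 b

@[simp] lemma e_apply0 (a b : ℕ) : e a b 0 = a := by
  simp [e, Finsupp.single_apply]

@[simp] lemma e_apply1 (a b : ℕ) : e a b 1 = b := by
  simp [e, Finsupp.single_apply]

lemma e_eq_iff {a b c d : ℕ} : e a b = e c d ↔ a = c ∧ b = d := by
  constructor
  · intro h
    exact ⟨by simpa using DFunLike.congr_fun h 0, by simpa using DFunLike.congr_fun h 1⟩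
  · rintro ⟨rfl, rfl⟩; rfl

lemma e_le_iff {a b c d : ℕ} : e a b ≤ e c d ↔ a ≤ c ∧ b ≤ d := by
  constructor
  · intro h
    exact ⟨by simpa using h 0, by simpa using h 1⟩
  · rintro ⟨h1, h2⟩ i
    fin_cases i <;> simpa

lemma e_sub (a b c d : ℕ) : e a b - e c d = e (a - c) (b - d) := by
  ext i
  fin_cases i <;> simp [Finsupp.tsub_apply]

lemma e_add_single (a b : ℕ) : e a b + Finsupp.single 0 1 = e (a + 1) b := by
  ext i
  fin_cases i <;> simp [Finsupp.single_apply]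

noncomputable def g₀ : MvPowerSeries (Fin 2) ℂ :=
  MvPowerSeries.X 0 ^ 4 + MvPowerSeries.X 0 ^ 2 * MvPowerSeries.X 1 ^ 3 +
    MvPowerSeries.X 1 ^ 5

lemma g₀_eq :
    g₀ = monomial (e 4 0) 1 + monomial (e 2 3) 1 + monomial (e 0 5) 1 := by
  have hA : Finsupp.single (0 : Fin 2) 4 = e 4 0 := by
    refine Finsupp.ext fun i => ?_
    fin_cases i <;> simp [e, Finsupp.single_apply]
  have hB : Finsupp.single (1 : Fin 2) 5 = e 0 5 := by
    refine Finsupp.ext fun i => ?_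
    fin_cases i <;> simp [e, Finsupp.single_apply]
  have h1 : (MvPowerSeries.X 0 : MvPowerSeries (Fin 2) ℂ) ^ 4 = monomial (e 4 0) 1 := by
    rw [X_pow_eq, hA]
  have h2 : (MvPowerSeries.X 0 : MvPowerSeries (Fin 2) ℂ) ^ 2 * MvPowerSeries.X 1 ^ 3
      = monomial (e 2 3) 1 := by
    rw [X_pow_eq, X_pow_eq, monomial_mul_monomial, one_mul]
    rfl
  have h3 : (MvPowerSeries.X 1 : MvPowerSeries (Fin 2) ℂ) ^ 5 = monomial (e 0 5) 1 := by
    rw [X_pow_eq, hB]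
  rw [g₀, h1, h2, h3]

lemma coeff_g₀ (m : Fin 2 →₀ ℕ) :
    MvPowerSeries.coeff m g₀ =
      (if m = e 4 0 then 1 else 0) + (if m = e 2 3 then 1 else 0)
        + (if m = e 0 5 then 1 else 0) := by
  rw [g₀_eq]
  simp [coeff_monomial]

lemma pderiv0_g₀ : psPderiv 0 g₀ = monomial (e 3 0) 4 + monomial (e 1 3) 2 := by
  ext m
  rw [map_add, coeff_monomial, coeff_monomial]
  show ((m 0 : ℂ) + 1) * MvPowerSeries.coeff (m + Finsupp.single 0 1) g₀ = _
  rw [coeff_g₀]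
  have hm : m = e (m 0) (m 1) := by
    refine Finsupp.ext fun i => ?_
    fin_cases i <;> simp
  rw [hm, e_add_single]
  simp only [e_eq_iff, e_apply0, e_apply1]
  by_cases h1 : m 0 = 3 ∧ m 1 = 0
  · obtain ⟨h1a, h1b⟩ := h1
    rw [h1a, h1b]
    norm_num
  · by_cases h2 : m 0 = 1 ∧ m 1 = 3
    · obtain ⟨h2a, h2b⟩ := h2
      rw [h2a, h2b]
      norm_num
    · have e1 : ¬ (m 0 + 1 = 4 ∧ m 1 = 0) := by omega
      have e2 : ¬ (m 0 + 1 = 2 ∧ m 1 = 3) := by omega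
      have e3 : ¬ (m 0 + 1 = 0 ∧ m 1 = 5) := by omega
      rw [if_neg e1, if_neg e2, if_neg e3, if_neg h1, if_neg h2]
      ring

lemma e_add_single1 (a b : ℕ) : e a b + Finsupp.single 1 1 = e a (b + 1) := by
  refine Finsupp.ext fun i => ?_
  fin_cases i <;> simp [Finsupp.single_apply]

lemma pderiv1_g₀ : psPderiv 1 g₀ = monomial (e 2 2) 3 + monomial (e 0 4) 5 := by
  ext m
  rw [map_add, coeff_monomial, coeff_monomial]
  show ((m 1 : ℂ) + 1) * MvPowerSeries.coeff (m + Finsupp.single 1 1) g₀ = _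
  rw [coeff_g₀]
  have hm : m = e (m 0) (m 1) := by
    refine Finsupp.ext fun i => ?_
    fin_cases i <;> simp
  rw [hm, e_add_single1]
  simp only [e_eq_iff, e_apply0, e_apply1]
  by_cases h1 : m 0 = 2 ∧ m 1 = 2
  · obtain ⟨h1a, h1b⟩ := h1
    rw [h1a, h1b]
    norm_num
  · by_cases h2 : m 0 = 0 ∧ m 1 = 4
    · obtain ⟨h2a, h2b⟩ := h2
      rw [h2a, h2b]
      norm_num
    · have e1 : ¬ (m 0 = 4 ∧ m 1 + 1 = 0) := by omega
      have e2 : ¬ (m 0 = 2 ∧ m 1 + 1 = 3) := by omega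
      have e3 : ¬ (m 0 = 0 ∧ m 1 + 1 = 5) := by omega
      rw [if_neg e1, if_neg e2, if_neg e3, if_neg h1, if_neg h2]
      ring

lemma key (a b : MvPowerSeries (Fin 2) ℂ)
    (hab : a * psPderiv 0 g₀ + b * psPderiv 1 g₀ = g₀) : False := by
  rw [pderiv0_g₀, pderiv1_g₀, mul_add, mul_add] at hab
  have H := fun m => congrArg (MvPowerSeries.coeff m) hab
  have h1 := H (e 4 0)
  have h2 := H (e 2 3)
  have h3 := H (e 0 5)
  rw [map_add, map_add, map_add] at h1 h2 h3
  rw [coeff_mul_monomial, coeff_mul_monomial, coeff_mul_monomial, coeff_mul_monomial] at h1 h2 h3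
  rw [coeff_g₀] at h1 h2 h3
  simp only [e_le_iff, e_sub, e_eq_iff] at h1 h2 h3
  norm_num at h1 h2 h3
  have : (0 : ℂ) = -1/10 := by linear_combination h2 - (1/2) * h1 - (3/5) * h3
  norm_num at this

lemma main : g₀ ∉ Ideal.span {psPderiv 0 g₀, psPderiv 1 g₀} := by
  intro h
  rw [Ideal.mem_span_pair] at h
  obtain ⟨a, b, hab⟩ := h
  exact key a b hab

end NotMemAux

/-- The series `g₀ := x⁴ + x² y³ + y⁵` does not belong to the ideal generated
by its partial derivatives in `ℂ[[x, y]]` (so `g₀` is not quasihomogeneous in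
any coordinates). -/
theorem not_mem_gradient_ideal :
    letI g₀ : MvPowerSeries (Fin 2) ℂ :=
      MvPowerSeries.X 0 ^ 4 + MvPowerSeries.X 0 ^ 2 * MvPowerSeries.X 1 ^ 3 +
        MvPowerSeries.X 1 ^ 5
    g₀ ∉ Ideal.span {psPderiv 0 g₀, psPderiv 1 g₀} :=
  NotMemAux.main
end
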